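/- arXiv:2508.02457 — 4 statements merged into one kernel-verified Lean document; each statement's English description precedes it below -/
import Mathlib

section
/- Let t, x ∈ ℝ with 0 < t < 1, x ≥ 0 and x·t < 1. Then the series ∑_{n=0}^∞ ( ∑_{λ ∈ Nat.Partition n} 2^(d(λ)) · x^(ℓ(λ)) ) · t^n is summable, the family m ↦ (1 + x·t^m)/(1 − x·t^m) indexed by integers m ≥ 1 is multipliable, and ∑_{n=0}^∞ ( ∑_{λ ∈ Nat.Partition n} 2^(d(λ)) · x^(ℓ(λ)) ) · t^n = ∏_{m=1}^∞ (1 + x·t^m)/(1 − x·t^m). -/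
open Finset Function

namespace PGFR

/-- An enumeration of the primes. -/
noncomputable def pe : ℕ ≃ Nat.Primes :=
  (@Denumerable.eqv Nat.Primes (nonempty_denumerable Nat.Primes).some).symm

/-- The `m`-th prime (in the enumeration `pe`). -/
noncomputable def pr (m : ℕ) : ℕ := (pe m : ℕ)

/-- The index of a prime `p` in the enumeration `pe` (junk value `0` otherwise). -/
noncomputable def idx (p : ℕ) : ℕ := if h : p.Prime then pe.symm ⟨p, h⟩ else 0

lemma pr_prime (m : ℕ) : (pr m).Prime := (pe m).2

lemma pr_injective : Injective pr :=
  fun a b h => pe.injective (Subtype.ext h)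

lemma idx_pr (m : ℕ) : idx (pr m) = m := by
  unfold idx pr
  rw [dif_pos (pe m).2]
  exact pe.symm_apply_apply m

lemma pr_idx {p : ℕ} (hp : p.Prime) : pr (idx p) = p := by
  unfold idx pr
  rw [dif_pos hp]
  exact congrArg Subtype.val (pe.apply_symm_apply (⟨p, hp⟩ : Nat.Primes))

section Main

variable {t x : ℝ}

/-- The multiplicative weight function on ℕ. -/
noncomputable def f (t x : ℝ) (n : ℕ) : ℝ :=
  if n = 0 then 0 else
    ∏ p ∈ n.primeFactors, 2 * (x * t ^ (idx p + 1)) ^ (n.factorization p)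

lemma f_zero : f t x 0 = 0 := by simp [f]

lemma f_one : f t x 1 = 1 := by simp [f]

lemma f_nonneg (ht : 0 ≤ t) (hx : 0 ≤ x) (n : ℕ) : 0 ≤ f t x n := by
  unfold f
  split
  · exact le_refl 0
  · exact Finset.prod_nonneg fun p _ => by positivity

lemma f_mul {m n : ℕ} (h : Nat.Coprime m n) : f t x (m * n) = f t x m * f t x n := by
  rcases eq_or_ne m 0 with rfl | hm
  · have hn : n = 1 := Nat.coprime_zero_left n |>.mp h
    subst hn
    simp [f_zero, f_one]
  rcases eq_or_ne n 0 with rfl | hn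
  · have hm1 : m = 1 := Nat.coprime_zero_right m |>.mp h
    subst hm1
    simp [f_zero, f_one]
  have hmn : m * n ≠ 0 := mul_ne_zero hm hn
  unfold f
  rw [if_neg hmn, if_neg hm, if_neg hn, h.primeFactors_mul,
    Finset.prod_union h.disjoint_primeFactors]
  congr 1
  · refine Finset.prod_congr rfl fun p hp => ?_
    have hpn : n.factorization p = 0 := by
      rw [← Finsupp.notMem_support_iff, Nat.support_factorization]
      exact Finset.disjoint_left.mp h.disjoint_primeFactors hp
    rw [Nat.factorization_mul hm hn, Finsupp.add_apply, hpn, add_zero]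
  · refine Finset.prod_congr rfl fun p hp => ?_
    have hpm : m.factorization p = 0 := by
      rw [← Finsupp.notMem_support_iff, Nat.support_factorization]
      exact Finset.disjoint_right.mp h.disjoint_primeFactors hp
    rw [Nat.factorization_mul hm hn, Finsupp.add_apply, hpm, zero_add]

lemma f_prime_pow {p : ℕ} (hp : p.Prime) (e : ℕ) :
    f t x (p ^ e) = if e = 0 then 1 else 2 * (x * t ^ (idx p + 1)) ^ e := by
  rcases eq_or_ne e 0 with rfl | he
  · simp [f_one]
  · unfold f
    rw [if_neg (pow_ne_zero e hp.pos.ne'), if_neg he,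
      Nat.Prime.factorization_pow hp, Nat.primeFactors_prime_pow he hp,
      Finset.prod_singleton, Finsupp.single_eq_same]

lemma hasSum_aux {y : ℝ} (hy0 : 0 ≤ y) (hy1 : y < 1) :
    HasSum (fun e : ℕ => if e = 0 then (1 : ℝ) else 2 * y ^ e) ((1 + y) / (1 - y)) := by
  have hy : (1 : ℝ) - y ≠ 0 := by linarith
  have h1 : HasSum (fun e : ℕ => 2 * y ^ e) (2 * (1 - y)⁻¹) :=
    (hasSum_geometric_of_lt_one hy0 hy1).mul_left 2
  have h2 : HasSum (fun e : ℕ => if e = 0 then (1 : ℝ) else 0) 1 := by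
    simpa using hasSum_ite_eq (0 : ℕ) (1 : ℝ)
  have h3 := h1.sub h2
  have heq : (fun e : ℕ => 2 * y ^ e - if e = 0 then (1 : ℝ) else 0)
      = fun e : ℕ => if e = 0 then (1 : ℝ) else 2 * y ^ e := by
    funext e
    rcases eq_or_ne e 0 with rfl | he
    · norm_num
    · simp [he]
  rw [heq] at h3
  convert h3 using 1
  · rfl
  have hinv := mul_inv_cancel₀ hy
  linear_combination (-1 : ℝ) * hinv

variable (ht0 : 0 < t) (ht1 : t < 1) (hx : 0 ≤ x) (hxt : x * t < 1)

include ht0 ht1 hx hxt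

lemma Y_le (m : ℕ) : x * t ^ (m + 1) ≤ x * t := by
  have : t ^ (m + 1) ≤ t ^ 1 := pow_le_pow_of_le_one ht0.le ht1.le (by omega)
  simpa using mul_le_mul_of_nonneg_left this hx

lemma Y_nonneg (m : ℕ) : 0 ≤ x * t ^ (m + 1) := by positivity

lemma hasSum_f_prime_pow {p : ℕ} (hp : p.Prime) :
    HasSum (fun e : ℕ => f t x (p ^ e))
      ((1 + x * t ^ (idx p + 1)) / (1 - x * t ^ (idx p + 1))) := by
  have hy0 : 0 ≤ x * t ^ (idx p + 1) := Y_nonneg ht0 ht1 hx hxt _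
  have hy1 : x * t ^ (idx p + 1) < 1 := (Y_le ht0 ht1 hx hxt _).trans_lt hxt
  have heq : (fun e : ℕ => f t x (p ^ e))
      = fun e : ℕ => if e = 0 then (1 : ℝ) else 2 * (x * t ^ (idx p + 1)) ^ e :=
    funext fun e => f_prime_pow hp e
  rw [heq]
  exact hasSum_aux hy0 hy1

lemma summable_norm_fpow {p : ℕ} (hp : p.Prime) :
    Summable (fun e : ℕ => ‖f t x (p ^ e)‖) :=
  (hasSum_f_prime_pow ht0 ht1 hx hxt hp).summable.congr
    fun e => (Real.norm_of_nonneg (f_nonneg ht0.le hx _)).symm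

lemma geom_shift : Summable (fun m : ℕ => x * t ^ (m + 1)) := by
  have h : Summable (fun m : ℕ => (x * t) * t ^ m) :=
    (summable_geometric_of_lt_one ht0.le ht1).mul_left _
  exact h.congr fun m => by ring

lemma one_sub_xt_pos : (0 : ℝ) < 1 - x * t := by linarith

lemma factor_le_exp {p : ℕ} (hp : p.Prime) :
    (∑' e, f t x (p ^ e)) ≤ Real.exp (2 / (1 - x * t) * (x * t ^ (idx p + 1))) := by
  set y := x * t ^ (idx p + 1) with hy
  have hy0 : 0 ≤ y := Y_nonneg ht0 ht1 hx hxt _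
  have hyxt : y ≤ x * t := Y_le ht0 ht1 hx hxt _
  have hxt0 : (0 : ℝ) < 1 - x * t := one_sub_xt_pos ht0 ht1 hx hxt
  have hy1 : (0 : ℝ) < 1 - y := by linarith
  rw [(hasSum_f_prime_pow ht0 ht1 hx hxt hp).tsum_eq]
  have e1 : (1 + y) / (1 - y) = 1 + 2 * y / (1 - y) := by
    field_simp
    ring
  have e2 : 2 * y / (1 - y) ≤ 2 / (1 - x * t) * y := by
    rw [div_mul_eq_mul_div]
    gcongr
  have e3 := Real.add_one_le_exp (2 / (1 - x * t) * y)
  rw [e1]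
  linarith

lemma summable_f : Summable (f t x) := by
  classical
  have hgeom := geom_shift ht0 ht1 hx hxt
  set S : ℝ := ∑' m : ℕ, x * t ^ (m + 1) with hS
  refine summable_of_sum_range_le (f_nonneg ht0.le hx)
    (c := Real.exp (2 / (1 - x * t) * S)) fun N => ?_
  have key := (EulerProduct.summable_and_hasSum_factoredNumbers_prod_filter_prime_tsum
      (f := f t x) f_one (fun {a b} hc => f_mul hc)
      (fun {p} hp => summable_norm_fpow ht0 ht1 hx hxt hp) (Finset.range N)).2
  have h1 : ∑ i ∈ Finset.range N, f t x i
      ≤ ∏ p ∈ (Finset.range N).filter Nat.Prime, ∑' e, f t x (p ^ e) := by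
    have hsub : ∑ i ∈ Finset.range N, f t x i
        = ∑ i ∈ (Finset.range N).filter (· ∈ Nat.factoredNumbers (Finset.range N)), f t x i := by
      refine (Finset.sum_subset (Finset.filter_subset _ _) fun i hi hni => ?_).symm
      rcases eq_or_ne i 0 with rfl | h0
      · exact f_zero
      · exfalso
        apply hni
        rw [Finset.mem_filter]
        refine ⟨hi, ?_⟩
        rw [Nat.mem_factoredNumbers]
        exact ⟨h0, fun q hq => Finset.mem_range.mpr
          (lt_of_le_of_lt (Nat.le_of_mem_primeFactorsList hq) (Finset.mem_range.mp hi))⟩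
    rw [hsub, ← Finset.sum_subtype_eq_sum_filter]
    exact sum_le_hasSum _ (fun i _ => f_nonneg ht0.le hx _) key
  refine h1.trans ?_
  have h2 : ∏ p ∈ (Finset.range N).filter Nat.Prime, ∑' e, f t x (p ^ e)
      ≤ ∏ p ∈ (Finset.range N).filter Nat.Prime,
          Real.exp (2 / (1 - x * t) * (x * t ^ (idx p + 1))) := by
    refine Finset.prod_le_prod (fun p _ => tsum_nonneg fun e => f_nonneg ht0.le hx _)
      fun p hp => factor_le_exp ht0 ht1 hx hxt (Finset.mem_filter.mp hp).2
  refine h2.trans ?_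
  rw [← Real.exp_sum]
  rw [Real.exp_le_exp]
  rw [← Finset.mul_sum]
  have hsum_le : ∑ p ∈ (Finset.range N).filter Nat.Prime, x * t ^ (idx p + 1) ≤ S := by
    have hinj : ∀ p ∈ (Finset.range N).filter Nat.Prime,
        ∀ q ∈ (Finset.range N).filter Nat.Prime, idx p = idx q → p = q := by
      intro p hp q hq h
      have hpp := (Finset.mem_filter.mp hp).2
      have hqq := (Finset.mem_filter.mp hq).2
      rw [← pr_idx hpp, ← pr_idx hqq, h]
    calc ∑ p ∈ (Finset.range N).filter Nat.Prime, x * t ^ (idx p + 1)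
        = ∑ m ∈ ((Finset.range N).filter Nat.Prime).image idx, x * t ^ (m + 1) :=
          (Finset.sum_image (f := fun m => x * t ^ (m + 1)) hinj).symm
      _ ≤ S := Summable.sum_le_tsum _ (fun m _ => Y_nonneg ht0 ht1 hx hxt m) hgeom
  have hc : (0:ℝ) ≤ 2 / (1 - x * t) :=
    div_nonneg (by norm_num) (one_sub_xt_pos ht0 ht1 hx hxt).le
  exact mul_le_mul_of_nonneg_left hsum_le hc

lemma hasProd_G :
    HasProd (fun m : ℕ => (1 + x * t ^ (m + 1)) / (1 - x * t ^ (m + 1)))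
      (∑' n, f t x n) := by
  have hsum : Summable (fun n => ‖f t x n‖) :=
    (summable_f ht0 ht1 hx hxt).congr
      fun n => (Real.norm_of_nonneg (f_nonneg ht0.le hx n)).symm
  have EP := EulerProduct.eulerProduct_hasProd (f := f t x) f_one
    (fun {a b} hc => f_mul hc) hsum f_zero
  have heq : (fun p : Nat.Primes => ∑' e, f t x ((p : ℕ) ^ e))
      = fun p : Nat.Primes =>
        (1 + x * t ^ (idx (p : ℕ) + 1)) / (1 - x * t ^ (idx (p : ℕ) + 1)) :=
    funext fun p => (hasSum_f_prime_pow ht0 ht1 hx hxt p.2).tsum_eq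
  rw [heq] at EP
  have h2 := (Equiv.hasProd_iff pe (f := fun p : Nat.Primes =>
    (1 + x * t ^ (idx (p : ℕ) + 1)) / (1 - x * t ^ (idx (p : ℕ) + 1)))).mpr EP
  have hfin : ((fun p : Nat.Primes =>
        (1 + x * t ^ (idx (p : ℕ) + 1)) / (1 - x * t ^ (idx (p : ℕ) + 1))) ∘ pe)
      = fun m : ℕ => (1 + x * t ^ (m + 1)) / (1 - x * t ^ (m + 1)) := by
    funext m
    have hm : idx ((pe m : ℕ)) = m := idx_pr m
    simp only [Function.comp_apply, hm]
  rwa [hfin] at h2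

end Main

section Comb

/-- The encoding of a multiset (of part sizes minus one) as a natural number. -/
noncomputable def Psi (s : Multiset ℕ) : ℕ := (s.map pr).prod

lemma factorization_multiset_prod {s : Multiset ℕ} (h : ∀ p ∈ s, p.Prime) :
    s.prod.factorization = s.toFinsupp := by
  induction s using Multiset.induction_on with
  | empty => simp
  | cons a s ih =>
      have ha : a.Prime := h a (Multiset.mem_cons_self a s)
      have hs : ∀ p ∈ s, p.Prime := fun p hp => h p (Multiset.mem_cons_of_mem hp)
      have hs0 : s.prod ≠ 0 :=
        Multiset.prod_ne_zero fun h0 => (hs 0 h0).ne_zero rfl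
      rw [Multiset.prod_cons, Nat.factorization_mul ha.pos.ne' hs0, ih hs,
        ha.factorization]
      ext q
      simp only [Finsupp.add_apply, Multiset.toFinsupp_apply, Multiset.count_cons,
        Finsupp.single_apply]
      rcases eq_or_ne q a with rfl | hq
      · simp [add_comm]
      · simp [hq, Ne.symm hq]

lemma Psi_primes {s : Multiset ℕ} : ∀ p ∈ s.map pr, p.Prime := by
  intro p hp
  obtain ⟨m, _, rfl⟩ := Multiset.mem_map.mp hp
  exact pr_prime m

lemma Psi_factorization (s : Multiset ℕ) :
    (Psi s).factorization = (s.map pr).toFinsupp :=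
  factorization_multiset_prod Psi_primes

lemma Psi_ne_zero (s : Multiset ℕ) : Psi s ≠ 0 :=
  Multiset.prod_ne_zero fun h0 => (Psi_primes 0 h0).ne_zero rfl

lemma Psi_injective : Function.Injective Psi := by
  intro s s' h
  have h2 : (s.map pr).toFinsupp = (s'.map pr).toFinsupp := by
    rw [← Psi_factorization, ← Psi_factorization, h]
  exact Multiset.map_injective pr_injective
    (Multiset.toFinsupp.injective h2)

lemma support_Psi {t x : ℝ} : Function.support (f t x) ⊆ Set.range Psi := by
  intro n hn
  have h0 : n ≠ 0 := by
    rintro rfl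
    exact hn f_zero
  refine ⟨(n.primeFactorsList : Multiset ℕ).map idx, ?_⟩
  unfold Psi
  rw [Multiset.map_map]
  have h1 : Multiset.map (pr ∘ idx) (↑n.primeFactorsList : Multiset ℕ)
      = Multiset.map id (↑n.primeFactorsList : Multiset ℕ) :=
    Multiset.map_congr rfl fun p hp =>
      pr_idx (Nat.prime_of_mem_primeFactorsList (Multiset.mem_coe.mp hp))
  rw [h1, Multiset.map_id, Multiset.prod_coe]
  exact Nat.prod_primeFactorsList h0

lemma f_Psi {t x : ℝ} (s : Multiset ℕ) :
    f t x (Psi s)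
      = 2 ^ s.toFinset.card * x ^ (Multiset.card s) * t ^ ((s.map (· + 1)).sum) := by
  classical
  unfold f
  rw [if_neg (Psi_ne_zero s)]
  have hsupp : (Psi s).primeFactors = (s.map pr).toFinset := by
    rw [← Nat.support_factorization, Psi_factorization, Multiset.toFinsupp_support]
  rw [hsupp, Multiset.toFinset_map, Finset.prod_image (fun a _ b _ h => pr_injective h)]
  have hterm : ∀ j ∈ s.toFinset,
      2 * (x * t ^ (idx (pr j) + 1)) ^ ((Psi s).factorization (pr j))
      = 2 * (x ^ (s.count j) * t ^ ((j + 1) * s.count j)) := by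
    intro j _
    rw [Psi_factorization, Multiset.toFinsupp_apply,
      Multiset.count_map_eq_count' pr s pr_injective, idx_pr, mul_pow, ← pow_mul]
  rw [Finset.prod_congr rfl hterm]
  rw [Finset.prod_mul_distrib, Finset.prod_mul_distrib, Finset.prod_const]
  rw [Finset.prod_pow_eq_pow_sum, Finset.prod_pow_eq_pow_sum]
  rw [Multiset.toFinset_sum_count_eq]
  rw [Finset.sum_multiset_map_count s (fun j => j + 1)]
  rw [mul_assoc]
  congr 2
  refine congrArg (t ^ ·) (Finset.sum_congr rfl fun j _ => ?_)
  rw [smul_eq_mul, mul_comm]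

lemma sigma_mk_eq {u v : Multiset ℕ} (h : u = v)
    (hu : ∀ {i : ℕ}, i ∈ u → 0 < i) (hv : ∀ {i : ℕ}, i ∈ v → 0 < i) :
    (⟨u.sum, ⟨u, hu, rfl⟩⟩ : Σ n, Nat.Partition n) = ⟨v.sum, ⟨v, hv, rfl⟩⟩ := by
  subst h; rfl

/-- The bijection between multisets of naturals and partitions (shifting parts by one). -/
noncomputable def Theta : Multiset ℕ ≃ (Σ n, Nat.Partition n) where
  toFun s := ⟨(s.map (· + 1)).sum,
    ⟨s.map (· + 1), fun {i} hi => by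
      obtain ⟨j, _, rfl⟩ := Multiset.mem_map.mp hi
      exact Nat.succ_pos j, rfl⟩⟩
  invFun σ := σ.2.parts.map (· - 1)
  left_inv s := by
    show (Multiset.map (· + 1) s).map (· - 1) = s
    rw [Multiset.map_map]
    simp
  right_inv σ := by
    obtain ⟨n, ⟨parts, hpos, hsum⟩⟩ := σ
    subst hsum
    have h : (Multiset.map (· - 1) parts).map (· + 1) = parts := by
      rw [Multiset.map_map]
      have h2 : Multiset.map ((· + 1) ∘ (· - 1)) parts = Multiset.map id parts :=
        Multiset.map_congr rfl fun i hi => Nat.succ_pred_eq_of_pos (hpos hi)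
      rw [h2, Multiset.map_id]
    show (⟨((Multiset.map (· - 1) parts).map (· + 1)).sum, ⟨_, _, rfl⟩⟩ :
      Σ n, Nat.Partition n) = _
    exact sigma_mk_eq h _ hpos

end Comb

end PGFR

open Finset

theorem partition_generating_function_refined
    (t x : ℝ) (ht0 : 0 < t) (ht1 : t < 1) (hx : 0 ≤ x) (hxt : x * t < 1) :
    Summable (fun n : ℕ =>
      (∑ lam : Nat.Partition n,
        (2 : ℝ) ^ lam.parts.toFinset.card * x ^ (Multiset.card lam.parts)) * t ^ n) ∧
    Multipliable (fun m : ℕ =>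
      (1 + x * t ^ (m + 1)) / (1 - x * t ^ (m + 1))) ∧
    ∑' n : ℕ,
        (∑ lam : Nat.Partition n,
          (2 : ℝ) ^ lam.parts.toFinset.card * x ^ (Multiset.card lam.parts)) * t ^ n =
      ∏' m : ℕ, (1 + x * t ^ (m + 1)) / (1 - x * t ^ (m + 1)) := by
  classical
  have hProd := PGFR.hasProd_G ht0 ht1 hx hxt
  set wσ : (Σ n, Nat.Partition n) → ℝ := fun σ =>
    2 ^ σ.2.parts.toFinset.card * x ^ (Multiset.card σ.2.parts) * t ^ σ.1 with hwσ
  have hcomp : ∀ s : Multiset ℕ, wσ (PGFR.Theta s) = PGFR.f t x (PGFR.Psi s) := by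
    intro s
    rw [PGFR.f_Psi]
    simp only [hwσ, PGFR.Theta, Equiv.coe_fn_mk]
    rw [Multiset.toFinset_map, Finset.card_image_of_injective _ (add_left_injective 1),
      Multiset.card_map]
  have hsum_f : Summable (PGFR.f t x) := PGFR.summable_f ht0 ht1 hx hxt
  have hsum_w : Summable (fun s : Multiset ℕ => PGFR.f t x (PGFR.Psi s)) :=
    hsum_f.comp_injective PGFR.Psi_injective
  have hsum_σ : Summable wσ := by
    rw [← Equiv.summable_iff PGFR.Theta]
    exact hsum_w.congr fun s => (hcomp s).symm
  have h1 : ∑' σ, wσ σ = ∑' n, PGFR.f t x n := by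
    rw [← PGFR.Theta.tsum_eq wσ, tsum_congr hcomp]
    exact PGFR.Psi_injective.tsum_eq PGFR.support_Psi
  have houter : Summable (fun n : ℕ => ∑' lam : Nat.Partition n, wσ ⟨n, lam⟩) :=
    hsum_σ.sigma
  have hout_eq : ∀ n : ℕ, (∑' lam : Nat.Partition n, wσ ⟨n, lam⟩)
      = (∑ lam : Nat.Partition n,
          (2 : ℝ) ^ lam.parts.toFinset.card * x ^ (Multiset.card lam.parts)) * t ^ n := by
    intro n
    rw [tsum_fintype, Finset.sum_mul]
  refine ⟨houter.congr fun n => hout_eq n, hProd.multipliable, ?_⟩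
  calc ∑' n : ℕ, (∑ lam : Nat.Partition n,
          (2 : ℝ) ^ lam.parts.toFinset.card * x ^ (Multiset.card lam.parts)) * t ^ n
      = ∑' n : ℕ, ∑' lam : Nat.Partition n, wσ ⟨n, lam⟩ :=
        tsum_congr fun n => (hout_eq n).symm
    _ = ∑' σ, wσ σ := (hsum_σ.tsum_sigma).symm
    _ = ∑' n, PGFR.f t x n := h1
    _ = ∏' m : ℕ, (1 + x * t ^ (m + 1)) / (1 - x * t ^ (m + 1)) := hProd.tprod_eq.symm
end

section
/- Let t, x, y ∈ ℝ with 0 < t < 1, x ≥ 0, y ≥ 0, x·t < 1 and x·y·t < 1. Then the series ∑_{n=0}^∞ ( ∑_{λ ∈ Nat.Partition n} 2^(d(λ)) · x^(ℓ(λ)) · y^(m₁(λ)) ) · t^n is summable, the family m ↦ (1 + x·t^m)/(1 − x·t^m) indexed by integers m ≥ 2 is multipliable, and ∑_{n=0}^∞ ( ∑_{λ ∈ Nat.Partition n} 2^(d(λ)) · x^(ℓ(λ)) · y^(m₁(λ)) ) · t^n = (1 + x·y·t)/(1 − x·y·t) · ∏_{m=2}^∞ (1 + x·t^m)/(1 −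 x·t^m), where m₁(λ) denotes the multiplicity of the part 1 in λ. -/
set_option maxHeartbeats 1000000


open Finset

namespace PartitionGFAux

/-- Sum of the multiset associated to a finsupp. -/
lemma toMultiset_sum_eq (f : ℕ →₀ ℕ) :
    (Finsupp.toMultiset f).sum = ∑ a ∈ f.support, f a * a := by
  rw [Finsupp.toMultiset_apply, Finsupp.multiset_sum_sum]
  rw [Finsupp.sum]
  refine Finset.sum_congr rfl fun a _ => ?_
  simp [Multiset.nsmul_singleton, Multiset.sum_replicate, smul_eq_mul]

/-- Finite product of geometric-type series as a sum over finsupps supported in `u`. -/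
lemma hasSum_restrict (g : ℕ → ℕ → ℝ) (h0 : ∀ k, g k 0 = 1)
    (hpos : ∀ k m, 0 ≤ g k m) (s : ℕ → ℝ) (hs : ∀ k, HasSum (g k) (s k))
    (u : Finset ℕ) :
    HasSum (fun f : {f : ℕ →₀ ℕ // f.support ⊆ u} =>
      ∏ k ∈ u, g k (f.1 k)) (∏ k ∈ u, s k) := by
  classical
  induction u using Finset.induction with
  | empty =>
      haveI : Unique {f : ℕ →₀ ℕ // f.support ⊆ (∅ : Finset ℕ)} := by
        refine ⟨⟨⟨0, by simp⟩⟩, ?_⟩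
        rintro ⟨f, hf⟩
        refine Subtype.ext ?_
        ext k
        by_contra h
        exact absurd (hf (Finsupp.mem_support_iff.mpr h)) (Finset.notMem_empty k)
      have h1 := hasSum_fintype
        (fun f : {f : ℕ →₀ ℕ // f.support ⊆ (∅ : Finset ℕ)} => ∏ k ∈ (∅ : Finset ℕ), g k (f.1 k))
      simpa using h1
  | @insert a u ha ih =>
      -- the equivalence with ℕ × (restricted finsupps)
      have hsub1 : ∀ (m : ℕ) (f : {f : ℕ →₀ ℕ // f.support ⊆ u}),
          (f.1 + Finsupp.single a m).support ⊆ insert a u := by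
        intro m f k hk
        rcases Finset.mem_union.mp (Finsupp.support_add hk) with h | h
        · exact Finset.mem_insert_of_mem (f.2 h)
        · have := Finsupp.support_single_subset h
          rw [Finset.mem_singleton] at this
          exact this ▸ Finset.mem_insert_self a u
      have hsub2 : ∀ (f : {f : ℕ →₀ ℕ // f.support ⊆ insert a u}),
          (f.1.erase a).support ⊆ u := by
        intro f k hk
        rw [Finsupp.support_erase, Finset.mem_erase] at hk
        rcases Finset.mem_insert.mp (f.2 hk.2) with h | h
        · exact absurd h hk.1
        · exact h
      let E : ℕ × {f : ℕ →₀ ℕ // f.support ⊆ u} ≃ {f : ℕ →₀ ℕ // f.support ⊆ insert a u} :=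
        { toFun := fun p => ⟨p.2.1 + Finsupp.single a p.1, hsub1 p.1 p.2⟩
          invFun := fun f => (f.1 a, ⟨f.1.erase a, hsub2 f⟩)
          left_inv := by
            rintro ⟨m, f, hf⟩
            have hfa : f a = 0 := by
              by_contra h
              exact ha (hf (Finsupp.mem_support_iff.mpr h))
            have h1 : (f + Finsupp.single a m) a = m := by
              simp [hfa]
            have h2 : (f + Finsupp.single a m).erase a = f := by
              rw [Finsupp.erase_add, Finsupp.erase_single, add_zero,
                Finsupp.erase_of_notMem_support (Finsupp.notMem_support_iff.mpr hfa)]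
            exact Prod.ext h1 (Subtype.ext h2)
          right_inv := by
            rintro ⟨f, hf⟩
            exact Subtype.ext (Finsupp.erase_add_single a f) }
      have hmul : HasSum (fun p : ℕ × {f : ℕ →₀ ℕ // f.support ⊆ u} =>
          g a p.1 * ∏ k ∈ u, g k (p.2.1 k)) (s a * ∏ k ∈ u, s k) := by
        have hsum1 : Summable (fun m : ℕ => ‖g a m‖) :=
          (hs a).summable.congr fun m => (Real.norm_of_nonneg (hpos a m)).symm
        have hsum2 : Summable (fun f : {f : ℕ →₀ ℕ // f.support ⊆ u} =>
            ‖∏ k ∈ u, g k (f.1 k)‖) :=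
          ih.summable.congr fun f =>
            (Real.norm_of_nonneg (Finset.prod_nonneg fun k _ => hpos _ _)).symm
        have : T3Space ℝ := inferInstance
        apply (hs a).mul ih
        apply summable_mul_of_summable_norm hsum1 hsum2
      have hfe : (fun p : ℕ × {f : ℕ →₀ ℕ // f.support ⊆ u} =>
          g a p.1 * ∏ k ∈ u, g k (p.2.1 k)) =
          (fun f : {f : ℕ →₀ ℕ // f.support ⊆ insert a u} =>
            ∏ k ∈ insert a u, g k (f.1 k)) ∘ E := by
        funext p
        obtain ⟨m, f, hf⟩ := p
        have hfa : f a = 0 := by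
          by_contra h
          exact ha (hf (Finsupp.mem_support_iff.mpr h))
        simp only [Function.comp_apply, E, Equiv.coe_fn_mk]
        rw [Finset.prod_insert ha]
        congr 1
        · simp [hfa]
        · refine Finset.prod_congr rfl fun k hk => ?_
          have hka : a ≠ k := fun h => ha (h ▸ hk)
          simp [Finsupp.single_apply, hka]
      rw [Finset.prod_insert ha]
      exact E.hasSum_iff.mp (hfe ▸ hmul)

/-- The key analytic lemma: a sum over all finsupps equals the infinite product of the
row sums. -/
lemma hasSum_finsupp (g : ℕ → ℕ → ℝ) (h0 : ∀ k, g k 0 = 1) (hpos : ∀ k m, 0 ≤ g k m)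
    (s : ℕ → ℝ) (hs : ∀ k, HasSum (g k) (s k)) (hm : Multipliable s) :
    HasSum (fun f : ℕ →₀ ℕ => ∏ k ∈ f.support, g k (f k)) (∏' k, s k) := by
  classical
  have hone : ∀ k, 1 ≤ s k := fun k => by
    have := le_hasSum (hs k) 0 fun j _ => hpos k j
    rwa [h0 k] at this
  have hGnn : ∀ f : ℕ →₀ ℕ, 0 ≤ ∏ k ∈ f.support, g k (f k) :=
    fun f => Finset.prod_nonneg fun k _ => hpos _ _
  have honeprod : ∀ v : Finset ℕ, (1 : ℝ) ≤ ∏ k ∈ v, s k := by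
    intro v
    calc (1 : ℝ) = ∏ _k ∈ v, (1 : ℝ) := Finset.prod_const_one.symm
      _ ≤ ∏ k ∈ v, s k := Finset.prod_le_prod (fun i _ => zero_le_one) (fun i _ => hone i)
  have hprodP : ∀ u : Finset ℕ, ∏ k ∈ u, s k ≤ ∏' k, s k := by
    intro u
    refine ge_of_tendsto hm.hasProd ?_
    refine Filter.eventually_atTop.2 ⟨u, fun v hv => ?_⟩
    rw [← Finset.prod_sdiff hv]
    exact le_mul_of_one_le_left
      (Finset.prod_nonneg fun k _ => le_trans zero_le_one (hone k)) (honeprod _)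
  have hsup : ∀ (f : ℕ →₀ ℕ) (u : Finset ℕ), f.support ⊆ u →
      ∏ k ∈ u, g k (f k) = ∏ k ∈ f.support, g k (f k) := by
    intro f u hu
    refine (Finset.prod_subset hu fun k _ hk => ?_).symm
    rw [Finsupp.notMem_support_iff.mp hk, h0]
  refine hasSum_of_isLUB_of_nonneg _ hGnn ⟨?_, ?_⟩
  · -- every partial sum is at most the infinite product
    rintro v ⟨F, rfl⟩
    obtain ⟨u, hsubset⟩ : ∃ u : Finset ℕ, ∀ f ∈ F, f.support ⊆ u :=
      ⟨F.sup Finsupp.support, fun f hf => Finset.le_sup hf⟩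
    -- embed `F` into the subtype
    let emb : {f : ℕ →₀ ℕ // f ∈ F} → {f : ℕ →₀ ℕ // f.support ⊆ u} :=
      fun f => ⟨f.1, hsubset f.1 f.2⟩
    have hembinj : Function.Injective emb := by
      intro p q h
      have h' : (emb p).1 = (emb q).1 := congrArg Subtype.val h
      exact Subtype.ext h'
    have h1 : ∑ f ∈ F, ∏ k ∈ f.support, g k (f k) =
        ∑ x ∈ F.attach.map ⟨emb, hembinj⟩, ∏ k ∈ u, g k (x.1 k) := by
      rw [Finset.sum_map]
      rw [← Finset.sum_attach F (fun f => ∏ k ∈ f.support, g k (f k))]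
      exact Finset.sum_congr rfl fun f _ => (hsup f.1 u (hsubset f.1 f.2)).symm
    calc ∑ f ∈ F, ∏ k ∈ f.support, g k (f k)
        = ∑ x ∈ F.attach.map ⟨emb, hembinj⟩, ∏ k ∈ u, g k (x.1 k) := h1
      _ ≤ ∏ k ∈ u, s k := sum_le_hasSum _ (fun x _ => Finset.prod_nonneg fun k _ => hpos _ _)
          (hasSum_restrict g h0 hpos s hs u)
      _ ≤ ∏' k, s k := hprodP u
  · -- ... and the infinite product is the least such bound
    intro b hb
    refine le_of_tendsto' hm.hasProd fun u => ?_
    refine hasSum_le_of_sum_le (hasSum_restrict g h0 hpos s hs u) fun A => ?_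
    have h2 : ∑ x ∈ A, ∏ k ∈ u, g k (x.1 k) =
        ∑ f ∈ A.image Subtype.val, ∏ k ∈ f.support, g k (f k) := by
      rw [Finset.sum_image (fun x _ y _ h => Subtype.ext h)]
      exact Finset.sum_congr rfl fun x _ => hsup x.1 u x.2
    rw [h2]
    exact hb ⟨A.image Subtype.val, rfl⟩

lemma sigma_helper {n : ℕ} (p : Nat.Partition n) (m : Multiset ℕ)
    (hpos : ∀ {i : ℕ}, i ∈ m → 0 < i) (h : m = p.parts) :
    (⟨m.sum, ⟨m, hpos, rfl⟩⟩ : Σ n, Nat.Partition n) = ⟨n, p⟩ := by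
  rcases p with ⟨parts, ppos, psum⟩
  subst psum
  subst h
  rfl

/-- The natural embedding `ℕ ↪ ℕ` by `succ`. -/
def succEmb : ℕ ↪ ℕ := ⟨Nat.succ, Nat.succ_injective⟩

/-- Partitions of arbitrary naturals correspond to finitely supported multiplicity
functions (indexed so that `k` records the multiplicity of the part `k + 1`). -/
noncomputable def sigmaEquiv : (ℕ →₀ ℕ) ≃ (Σ n, Nat.Partition n) where
  toFun f :=
    ⟨(Finsupp.toMultiset (f.embDomain succEmb)).sum,
      ⟨Finsupp.toMultiset (f.embDomain succEmb), by
        intro i hi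
        rw [Finsupp.mem_toMultiset, Finsupp.support_embDomain, Finset.mem_map] at hi
        obtain ⟨k, _, rfl⟩ := hi
        exact Nat.succ_pos k, rfl⟩⟩
  invFun p := Finsupp.comapDomain Nat.succ (Multiset.toFinsupp p.2.parts)
    Nat.succ_injective.injOn
  left_inv f := by
    ext k
    rw [Finsupp.comapDomain_apply, Finsupp.toMultiset_toFinsupp]
    exact Finsupp.embDomain_apply_self succEmb f k
  right_inv := by
    rintro ⟨n, p⟩
    have hsupp : ↑(Multiset.toFinsupp p.parts).support ⊆ Set.range Nat.succ := by
      intro i hi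
      have h1 : i ∈ p.parts.toFinset := by
        rwa [Multiset.toFinsupp_support] at hi
      have h2 := p.parts_pos (Multiset.mem_toFinset.mp h1)
      exact ⟨i - 1, Nat.succ_pred_eq_of_pos h2⟩
    have key : Finsupp.embDomain succEmb
        (Finsupp.comapDomain Nat.succ (Multiset.toFinsupp p.parts) Nat.succ_injective.injOn)
        = Multiset.toFinsupp p.parts := Finsupp.embDomain_comapDomain hsupp
    refine sigma_helper p _ _ ?_
    rw [key, Multiset.toFinsupp_toMultiset]

end PartitionGFAux

open PartitionGFAux

theorem partition_generating_function_doubly_refined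
    (t x y : ℝ) (ht0 : 0 < t) (ht1 : t < 1) (hx : 0 ≤ x) (hy : 0 ≤ y)
    (hxt : x * t < 1) (hxyt : x * y * t < 1) :
    Summable (fun n : ℕ =>
      (∑ lam : Nat.Partition n,
        (2 : ℝ) ^ lam.parts.toFinset.card * x ^ (Multiset.card lam.parts) *
          y ^ (lam.parts.count 1)) * t ^ n) ∧
    Multipliable (fun m : ℕ =>
      (1 + x * t ^ (m + 2)) / (1 - x * t ^ (m + 2))) ∧
    ∑' n : ℕ,
        (∑ lam : Nat.Partition n,
          (2 : ℝ) ^ lam.parts.toFinset.card * x ^ (Multiset.card lam.parts) *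
            y ^ (lam.parts.count 1)) * t ^ n =
      (1 + x * y * t) / (1 - x * y * t) *
        ∏' m : ℕ, (1 + x * t ^ (m + 2)) / (1 - x * t ^ (m + 2)) := by
  classical
  set c : ℕ → ℝ := fun k => x * t ^ (k + 1) * (if k = 0 then y else 1) with hc
  set s : ℕ → ℝ := fun k => (1 + c k) / (1 - c k) with hsdef
  set g : ℕ → ℕ → ℝ := fun k m => if m = 0 then 1 else 2 * c k ^ m with hg
  have hc0 : ∀ k, 0 ≤ c k := by
    intro k
    refine mul_nonneg (mul_nonneg hx (pow_nonneg ht0.le _)) ?_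
    split <;> [exact hy; exact zero_le_one]
  have hc0eq : c 0 = x * y * t := by
    rw [hc]
    show x * t ^ (0 + 1) * (if (0 : ℕ) = 0 then y else 1) = x * y * t
    rw [if_pos rfl, pow_one]; ring
  have hcseq : ∀ n : ℕ, c (n + 1) = x * t ^ (n + 2) := by
    intro n
    rw [hc]
    show x * t ^ (n + 1 + 1) * (if n + 1 = 0 then y else 1) = x * t ^ (n + 2)
    rw [if_neg (Nat.succ_ne_zero n), mul_one]
  have hcle : ∀ k, c k ≤ max (x * t) (x * y * t) := by
    intro k
    cases k with
    | zero => rw [hc0eq]; exact le_max_right _ _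
    | succ n =>
        rw [hcseq n]
        refine le_max_of_le_left ?_
        have h1 : t ^ (n + 2) ≤ t ^ 1 :=
          pow_le_pow_of_le_one ht0.le ht1.le (by omega)
        calc x * t ^ (n + 2) ≤ x * t ^ 1 := mul_le_mul_of_nonneg_left h1 hx
          _ = x * t := by rw [pow_one]
  have hmax1 : max (x * t) (x * y * t) < 1 := max_lt hxt hxyt
  have hc1 : ∀ k, c k < 1 := fun k => lt_of_le_of_lt (hcle k) hmax1
  have h1c : ∀ k, 0 < 1 - c k := fun k => by linarith [hc1 k]
  have hg0 : ∀ k, g k 0 = 1 := fun k => by simp [hg]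
  have hgpos : ∀ k m, 0 ≤ g k m := by
    intro k m
    simp only [hg]
    split
    · exact zero_le_one
    · positivity
  have hs : ∀ k, HasSum (g k) (s k) := by
    intro k
    have hgeom : HasSum (fun m : ℕ => 2 * c k ^ m) (2 * (1 - c k)⁻¹) :=
      (hasSum_geometric_of_lt_one (hc0 k) (hc1 k)).mul_left 2
    have hone' : HasSum (fun m : ℕ => if m = 0 then (-1 : ℝ) else 0) (-1) :=
      hasSum_ite_eq 0 (-1)
    have hfun : g k = fun m => 2 * c k ^ m + (if m = 0 then (-1 : ℝ) else 0) := by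
      funext m
      by_cases hm0 : m = 0
      · simp [hg, hm0]
        norm_num
      · simp [hg, hm0]
    have hne : (1 : ℝ) - c k ≠ 0 := (h1c k).ne'
    have hval : s k = 2 * (1 - c k)⁻¹ + -1 := by
      rw [hsdef]
      field_simp
      ring
    rw [hfun, hval]
    exact hgeom.add hone'
  have hs1 : ∀ k, 1 ≤ s k := by
    intro k
    rw [hsdef, le_div_iff₀ (h1c k)]
    linarith [hc0 k]
  have hspos : ∀ k, 0 < s k := fun k => lt_of_lt_of_le one_pos (hs1 k)
  -- summability of the logs, hence multipliability
  have hδ : 0 < 1 - max (x * t) (x * y * t) := by linarith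
  have hlog : Summable fun k => Real.log (s k) := by
    set δ := 1 - max (x * t) (x * y * t) with hδdef
    set K := 2 * (x * max y 1 * t) / δ with hK
    have hKnn : 0 ≤ K := by
      have : 0 ≤ x * max y 1 * t :=
        mul_nonneg (mul_nonneg hx (le_max_of_le_right zero_le_one)) ht0.le
      positivity
    refine Summable.of_nonneg_of_le (fun k => Real.log_nonneg (hs1 k)) (fun k => ?_)
      ((summable_geometric_of_lt_one ht0.le ht1).mul_left K)
    have hck : c k ≤ (x * max y 1) * t ^ (k + 1) := by
      cases k with
      | zero =>
          rw [hc0eq, pow_one]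
          have hyle : y ≤ max y 1 := le_max_left y 1
          have hxt0 : 0 ≤ x * t := mul_nonneg hx ht0.le
          calc x * y * t = x * t * y := by ring
            _ ≤ x * t * max y 1 := mul_le_mul_of_nonneg_left hyle hxt0
            _ = x * max y 1 * t := by ring
      | succ n =>
          rw [hcseq n]
          have h1 : (1 : ℝ) ≤ max y 1 := le_max_right y 1
          have hT : 0 ≤ x * t ^ (n + 2) := mul_nonneg hx (pow_nonneg ht0.le _)
          calc x * t ^ (n + 2) = x * t ^ (n + 2) * 1 := (mul_one _).symm
            _ ≤ x * t ^ (n + 2) * max y 1 := mul_le_mul_of_nonneg_left h1 hT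
            _ = x * max y 1 * t ^ (n + 1 + 1) := by ring
    calc Real.log (s k) ≤ s k - 1 := Real.log_le_sub_one_of_pos (hspos k)
      _ = 2 * c k / (1 - c k) := by
          have hne : (1 : ℝ) - c k ≠ 0 := (h1c k).ne'
          rw [hsdef]
          field_simp
          ring
      _ ≤ 2 * c k / δ := by
          apply div_le_div_of_nonneg_left (by linarith [hc0 k]) hδ
          have := hcle k
          rw [hδdef]; linarith
      _ ≤ 2 * ((x * max y 1) * t ^ (k + 1)) / δ := by
          gcongr
      _ = K * t ^ k := by
          rw [hK, pow_succ]
          field_simp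
  have hm : Multipliable s :=
    Real.multipliable_of_summable_log (fun k => hspos k) hlog
  -- the key HasSum over finsupps
  have key : HasSum (fun f : ℕ →₀ ℕ => ∏ k ∈ f.support, g k (f k)) (∏' k, s k) :=
    hasSum_finsupp g hg0 hgpos s hs hm
  -- transport to the sigma type of partitions
  set F : (Σ n, Nat.Partition n) → ℝ := fun p =>
    ((2 : ℝ) ^ p.2.parts.toFinset.card * x ^ (Multiset.card p.2.parts) *
      y ^ (p.2.parts.count 1)) * t ^ p.1 with hF
  have hweight : (fun f : ℕ →₀ ℕ => ∏ k ∈ f.support, g k (f k)) = F ∘ sigmaEquiv := by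
    funext f
    simp only [Function.comp_apply, hF]
    -- unfold sigmaEquiv
    set M := Finsupp.toMultiset (f.embDomain succEmb) with hM
    have hMparts : (sigmaEquiv f).2.parts = M := rfl
    have hMfst : (sigmaEquiv f).1 = M.sum := rfl
    rw [hMparts, hMfst]
    -- the four combinatorial facts
    have fact1 : M.toFinset.card = f.support.card := by
      have : M.toFinset = f.support.map succEmb := by
        rw [hM, ← Multiset.toFinsupp_support, Finsupp.toMultiset_toFinsupp,
          Finsupp.support_embDomain]
      rw [this, Finset.card_map]
    have fact2 : Multiset.card M = ∑ k ∈ f.support, f k := by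
      rw [hM, Finsupp.card_toMultiset, Finsupp.sum_embDomain]
      rfl
    have fact3 : M.count 1 = f 0 := by
      rw [hM, Finsupp.count_toMultiset]
      exact Finsupp.embDomain_apply_self succEmb f 0
    have fact4 : M.sum = ∑ k ∈ f.support, f k * (k + 1) := by
      rw [hM, toMultiset_sum_eq, Finsupp.support_embDomain, Finset.sum_map]
      refine Finset.sum_congr rfl fun k _ => ?_
      rw [Finsupp.embDomain_apply_self]
      rfl
    rw [fact1, fact2, fact3, fact4]
    -- now the algebraic computation
    have step1 : ∏ k ∈ f.support, g k (f k) = ∏ k ∈ f.support, 2 * c k ^ f k := by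
      refine Finset.prod_congr rfl fun k hk => ?_
      rw [hg]
      simp only [if_neg (Finsupp.mem_support_iff.mp hk)]
    rw [step1]
    have step2 : ∏ k ∈ f.support, 2 * c k ^ f k =
        2 ^ f.support.card * ∏ k ∈ f.support, c k ^ f k := by
      rw [Finset.prod_mul_distrib, Finset.prod_const]
    rw [step2]
    have step3 : ∏ k ∈ f.support, c k ^ f k =
        (∏ k ∈ f.support, x ^ f k) * (∏ k ∈ f.support, (t ^ (k + 1)) ^ f k) *
        (∏ k ∈ f.support, (if k = 0 then y else 1) ^ f k) := by
      rw [← Finset.prod_mul_distrib, ← Finset.prod_mul_distrib]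
      refine Finset.prod_congr rfl fun k _ => ?_
      rw [hc, mul_pow, mul_pow]
    rw [step3]
    have step4 : ∏ k ∈ f.support, x ^ f k = x ^ (∑ k ∈ f.support, f k) :=
      Finset.prod_pow_eq_pow_sum _ _ _
    have step5 : ∏ k ∈ f.support, (t ^ (k + 1)) ^ f k =
        t ^ (∑ k ∈ f.support, f k * (k + 1)) := by
      rw [← Finset.prod_pow_eq_pow_sum]
      refine Finset.prod_congr rfl fun k _ => ?_
      rw [← pow_mul, mul_comm (f k) (k + 1), pow_mul]
    have step6 : ∏ k ∈ f.support, (if k = 0 then y else 1) ^ f k = y ^ f 0 := by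
      have : ∀ k ∈ f.support, (if k = 0 then y else 1) ^ f k =
          (if k = 0 then y ^ f k else 1) := by
        intro k _
        split <;> simp
      rw [Finset.prod_congr rfl this, Finset.prod_ite_eq' f.support 0 (fun k => y ^ f k)]
      split
      · rfl
      · rename_i h
        rw [Finsupp.notMem_support_iff.mp h, pow_zero]
    rw [step4, step5, step6]
    ring
  have keyS : HasSum F (∏' k, s k) :=
    sigmaEquiv.hasSum_iff.mp (hweight ▸ key)
  -- collapse the fibers
  set a : ℕ → ℝ := fun n =>
    (∑ lam : Nat.Partition n,
      (2 : ℝ) ^ lam.parts.toFinset.card * x ^ (Multiset.card lam.parts) *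
        y ^ (lam.parts.count 1)) * t ^ n with ha
  have hfiber : ∀ n : ℕ, HasSum (fun lam : Nat.Partition n => F ⟨n, lam⟩) (a n) := by
    intro n
    have := hasSum_fintype (fun lam : Nat.Partition n => F ⟨n, lam⟩)
    convert this using 1
    simp only [ha, hF]
    rw [Finset.sum_mul]
  have main : HasSum a (∏' k, s k) := keyS.sigma hfiber
  -- identify the two infinite products
  have hs0 : s 0 = (1 + x * y * t) / (1 - x * y * t) := by
    simp only [hsdef]
    rw [hc0eq]
  have hsshift : ∀ m : ℕ, s (m + 1) = (1 + x * t ^ (m + 2)) / (1 - x * t ^ (m + 2)) := by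
    intro m
    simp only [hsdef]
    rw [hcseq m]
  have hmshift : Multipliable (fun m : ℕ => s (m + 1)) := by
    have hlog' : Summable (fun m : ℕ => Real.log (s (m + 1))) :=
      (summable_nat_add_iff 1).mpr hlog
    exact Real.multipliable_of_summable_log (fun m => hspos (m + 1)) hlog'
  have hm2 : Multipliable (fun m : ℕ => (1 + x * t ^ (m + 2)) / (1 - x * t ^ (m + 2))) :=
    hmshift.congr hsshift
  refine ⟨main.summable, hm2, ?_⟩
  rw [main.tsum_eq, tprod_eq_zero_mul' hmshift, hs0]
  congr 1
  exact tprod_congr hsshift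
end

section
/- Let b, c : ℕ → ℝ and write c′ for the extension of c to ℤ vanishing on negative integers. Let n ≥ 1 and m : Fin n → ℕ with m i ≥ 1 for all i. For a finpartition p of the full finset of Fin n and a part q of p, let δ_q := 1 if m is constant on q and 0 otherwise, and v_q the value of m at the minimal element of q. Set S(m) := ∑_p c′(n − ∑_{q ∈ p.parts} v_q) · ∏_{q ∈ p.parts} δ_q · (b v_q) · Nat.descFactorial v_q (q.card), the sum over all finpartitions p of the full finset of Fin n. For v ≥ 1 let k_v := card {i : Fin n | m i = v}. Then: if v divides k_v for every value v in the range of m, then S(m) = (c 0) · ∏_{v ∈ range of m} (b v)^(k_v / v) · (k_v)! / (k_v / v)!; otherwise S(m) = 0. -/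
open Finset

/-- The partition sum `S(m)`: for a finpartition `p` of `Fin n`, each part `q` contributes
`δ_q · b(v_q) · descFactorial v_q |q|`, where `v_q` is the value of `m` at the minimal element
of `q` and `δ_q` is `1` iff `m` is constant on `q`; the whole is weighted by
`c′(n − ∑_q v_q)`. -/
noncomputable def partSum (b : ℕ → ℝ) (c' : ℤ → ℝ) (n : ℕ) (m : Fin n → ℕ) : ℝ :=
  ∑ p : Finpartition (Finset.univ : Finset (Fin n)),
    c' ((n : ℤ) - ∑ q ∈ p.parts.attach,
          (m ((q : Finset (Fin n)).min' (p.nonempty_of_mem_parts q.2)) : ℤ)) *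
      ∏ q ∈ p.parts.attach,
        (if ∀ i ∈ (q : Finset (Fin n)), ∀ j ∈ (q : Finset (Fin n)), m i = m j
            then (1 : ℝ) else 0) *
          b (m ((q : Finset (Fin n)).min' (p.nonempty_of_mem_parts q.2))) *
          (Nat.descFactorial (m ((q : Finset (Fin n)).min' (p.nonempty_of_mem_parts q.2)))
            (q : Finset (Fin n)).card : ℝ)


lemma avoid_parts_of_mem {α : Type*} [DecidableEq α] {s : Finset α} (p : Finpartition s)
    {t : Finset α} (ht : t ∈ p.parts) : (p.avoid t).parts = p.parts.erase t := by
  ext c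
  rw [Finpartition.mem_avoid, mem_erase]
  constructor
  · rintro ⟨d, hd, hdt, rfl⟩
    have hne : d ≠ t := by rintro rfl; exact hdt le_rfl
    have hdis : Disjoint d t := p.disjoint hd ht hne
    rw [hdis.sdiff_eq_left]
    exact ⟨hne, hd⟩
  · rintro ⟨hne, hc⟩
    have hdis : Disjoint c t := p.disjoint hc ht hne
    refine ⟨c, hc, fun hle => ?_, hdis.sdiff_eq_left⟩
    exact p.ne_bot hc (le_bot_iff.1 ((le_inf le_rfl hle).trans hdis.le_bot))

lemma recursion {α : Type*} [DecidableEq α] (w : Finset α → ℝ) {s : Finset α} {a : α}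
    (ha : a ∈ s) :
    ∑ p : Finpartition s, ∏ q ∈ p.parts, w q
      = ∑ t ∈ s.powerset.filter (fun t => a ∈ t),
          w t * ∑ P : Finpartition (s \ t), ∏ q ∈ P.parts, w q := by
  rw [← Finset.sum_fiberwise_of_maps_to (g := fun p : Finpartition s => p.part a)
      (t := s.powerset.filter (fun t => a ∈ t))
      (fun p _ => by simp only [mem_filter, mem_powerset]; exact ⟨p.le (p.part_mem.2 ha), p.mem_part ha⟩)
      (fun p => ∏ q ∈ p.parts, w q)]
  refine Finset.sum_congr rfl fun t ht => ?_
  simp only [mem_filter, mem_powerset] at ht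
  obtain ⟨hts, hat⟩ := ht
  have htne : t ≠ ⊥ := by
    rw [Finset.bot_eq_empty]
    exact Finset.ne_empty_of_mem hat
  rw [Finset.mul_sum]
  refine Finset.sum_bij' (fun p _ => p.avoid t)
    (fun P _ => P.extend htne sdiff_disjoint (sdiff_sup_cancel hts)) (fun p _ => mem_univ _)
    ?_ ?_ ?_ ?_
  · intro P _
    simp only [mem_filter, mem_univ, true_and]
    exact Finpartition.part_eq_of_mem _ (by rw [Finpartition.extend_parts]; exact mem_insert_self _ _) hat
  · intro p hp
    simp only [mem_filter, mem_univ, true_and] at hp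
    have htp : t ∈ p.parts := hp ▸ p.part_mem.2 ha
    apply Finpartition.ext
    rw [Finpartition.extend_parts, avoid_parts_of_mem p htp, insert_erase htp]
  · intro P _
    have htP : t ∉ P.parts := by
      intro h
      have := P.le h hat
      simp at this
      exact this.2 hat
    apply Finpartition.ext
    rw [avoid_parts_of_mem _ (by rw [Finpartition.extend_parts]; exact mem_insert_self _ _),
      Finpartition.extend_parts, erase_insert htP]
  · intro p hp
    simp only [mem_filter, mem_univ, true_and] at hp
    have htp : t ∈ p.parts := hp ▸ p.part_mem.2 ha
    rw [avoid_parts_of_mem p htp, ← Finset.mul_prod_erase p.parts w htp]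


noncomputable def gfun (b : ℕ → ℝ) (v k : ℕ) : ℝ :=
  if v ∣ k then (b v) ^ (k / v) * (Nat.factorial k : ℝ) / (Nat.factorial (k / v) : ℝ) else 0

lemma card_coset {α : Type*} [DecidableEq α] (s : Finset α) {a : α} (ha : a ∈ s) {v : ℕ}
    (hv : 1 ≤ v) :
    (s.powerset.filter (fun t => a ∈ t ∧ t.card = v)).card = (s.card - 1).choose (v - 1) := by
  rw [← Finset.card_erase_of_mem ha, ← Finset.card_powersetCard (v - 1) (s.erase a)]
  refine Finset.card_bij' (fun t _ => t.erase a) (fun u _ => insert a u) ?_ ?_ ?_ ?_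
  · intro t ht
    simp only [mem_filter, mem_powerset] at ht
    rw [mem_powersetCard]
    exact ⟨erase_subset_erase a ht.1, by rw [card_erase_of_mem ht.2.1, ht.2.2]⟩
  · intro u hu
    rw [mem_powersetCard] at hu
    have hau : a ∉ u := fun h => (mem_erase.1 (hu.1 h)).1 rfl
    simp only [mem_filter, mem_powerset]
    refine ⟨insert_subset ha (hu.1.trans (erase_subset a s)), mem_insert_self _ _, ?_⟩
    rw [card_insert_of_notMem hau, hu.2]
    omega
  · intro t ht
    simp only [mem_filter, mem_powerset] at ht
    exact insert_erase ht.2.1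
  · intro u hu
    rw [mem_powersetCard] at hu
    exact erase_insert fun h => (mem_erase.1 (hu.1 h)).1 rfl

lemma gfun_rec (b : ℕ → ℝ) {v k : ℕ} (hv : 1 ≤ v) (hk : 1 ≤ k) :
    ((k - 1).choose (v - 1) : ℝ) * (b v * (Nat.factorial v : ℝ)) * gfun b v (k - v)
      = gfun b v k := by
  by_cases hvk : v ∣ k
  · have hkv : v ≤ k := Nat.le_of_dvd (by omega) hvk
    obtain ⟨e, he⟩ : ∃ e, k / v = e + 1 := ⟨k / v - 1, by
      have : 1 ≤ k / v := Nat.one_le_div_iff (by omega) |>.2 hkv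
      omega⟩
    have hkd : v * (e + 1) = k := by
      rw [← he]; exact Nat.mul_div_cancel' hvk
    have hkd' : v * e + v = k := by rw [← hkd, Nat.mul_succ]
    have hkv2 : k - v = v * e := by omega
    have hdvd2 : v ∣ k - v := ⟨e, hkv2⟩
    have hq2 : (k - v) / v = e := by rw [hkv2, Nat.mul_div_cancel_left e (by omega)]
    have hk1 : k.factorial = k * (k - 1).factorial := by
      conv_lhs => rw [show k = (k - 1) + 1 by omega]
      rw [Nat.factorial_succ]
      congr 1
      omega
    have hv1 : v.factorial = v * (v - 1).factorial := by
      conv_lhs => rw [show v = (v - 1) + 1 by omega]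
      rw [Nat.factorial_succ]
      congr 1
      omega
    have h1 := Nat.choose_mul_factorial_mul_factorial (show v - 1 ≤ k - 1 by omega)
    rw [show k - 1 - (v - 1) = k - v by omega] at h1
    have hnat : (k - 1).choose (v - 1) * v.factorial * (k - v).factorial * (e + 1)
        = k.factorial := by
      rw [hv1, hk1, ← h1, ← hkd]; ring
    have hnR : (((k - 1).choose (v - 1) : ℝ)) * (v.factorial : ℝ) * ((k - v).factorial : ℝ)
        * ((e : ℝ) + 1) = (k.factorial : ℝ) := by exact_mod_cast hnat
    rw [gfun, gfun, if_pos hdvd2, if_pos hvk, hq2, he, pow_succ, Nat.factorial_succ]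
    have hef : ((e.factorial : ℝ)) ≠ 0 := Nat.cast_ne_zero.2 e.factorial_ne_zero
    have he1 : ((e : ℝ) + 1) ≠ 0 := by positivity
    field_simp
    push_cast
    linear_combination (b v ^ e * b v * (e.factorial : ℝ)) * hnR
  · have h0 : gfun b v k = 0 := by rw [gfun, if_neg hvk]
    rw [h0]
    by_cases hkv : k < v
    · rw [Nat.choose_eq_zero_of_lt (by omega)]
      simp
    · have h2 : ¬ v ∣ (k - v) := fun h => hvk (by
        have := Nat.sub_add_cancel (le_of_not_gt hkv)
        exact this ▸ Nat.dvd_add h dvd_rfl)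
      have h02 : gfun b v (k - v) = 0 := by rw [gfun, if_neg h2]
      rw [h02, mul_zero]

lemma gfun_zero (b : ℕ → ℝ) (v : ℕ) : gfun b v 0 = 1 := by
  simp [gfun]

def Mv {n : ℕ} (m : Fin n → ℕ) (q : Finset (Fin n)) : ℕ :=
  if h : q.Nonempty then m (q.min' h) else 0

lemma Mv_eq {n : ℕ} (m : Fin n → ℕ) {q : Finset (Fin n)} (h : q.Nonempty) :
    Mv m q = m (q.min' h) := dif_pos h

noncomputable def Wt (b : ℕ → ℝ) {n : ℕ} (m : Fin n → ℕ) (q : Finset (Fin n)) : ℝ :=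
  if h : q.Nonempty then
    (if (∀ i ∈ q, m i = m (q.min' h)) ∧ q.card = m (q.min' h)
      then b (m (q.min' h)) * (Nat.factorial (m (q.min' h)) : ℝ) else 0)
  else 1

noncomputable def Fw (b : ℕ → ℝ) {n : ℕ} (m : Fin n → ℕ) (q : Finset (Fin n)) : ℝ :=
  (if ∀ i ∈ q, ∀ j ∈ q, m i = m j then (1 : ℝ) else 0) * b (Mv m q) *
    (Nat.descFactorial (Mv m q) q.card : ℝ)

lemma partSum_reduce (b : ℕ → ℝ) (c : ℕ → ℝ) (c' : ℤ → ℝ)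
    (hc'nat : ∀ j : ℕ, c' j = c j) (hc'neg : ∀ j : ℤ, j < 0 → c' j = 0)
    (n : ℕ) (m : Fin n → ℕ) :
    partSum b c' n m
      = c 0 * ∑ p : Finpartition (Finset.univ : Finset (Fin n)), ∏ q ∈ p.parts, Wt b m q := by
  rw [partSum, Finset.mul_sum]
  refine Finset.sum_congr rfl fun p _ => ?_
  have hsum : ∑ q ∈ p.parts.attach,
      (m ((q : Finset (Fin n)).min' (p.nonempty_of_mem_parts q.2)) : ℤ)
      = ∑ q ∈ p.parts, (Mv m q : ℤ) := by
    rw [← Finset.sum_attach p.parts (fun q => (Mv m q : ℤ))]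
    refine Finset.sum_congr rfl fun q _ => ?_
    rw [Mv_eq m (p.nonempty_of_mem_parts q.2)]
  have hprod : (∏ q ∈ p.parts.attach,
      (if ∀ i ∈ (q : Finset (Fin n)), ∀ j ∈ (q : Finset (Fin n)), m i = m j
            then (1 : ℝ) else 0) *
          b (m ((q : Finset (Fin n)).min' (p.nonempty_of_mem_parts q.2))) *
          (Nat.descFactorial (m ((q : Finset (Fin n)).min' (p.nonempty_of_mem_parts q.2)))
            (q : Finset (Fin n)).card : ℝ))
      = ∏ q ∈ p.parts, Fw b m q := by
    rw [← Finset.prod_attach p.parts (fun q => Fw b m q)]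
    refine Finset.prod_congr rfl fun q _ => ?_
    rw [Fw, Mv_eq m (p.nonempty_of_mem_parts q.2)]
  rw [hsum, hprod]
  by_cases h1 : ∀ q ∈ p.parts, ∀ i ∈ q, ∀ j ∈ q, m i = m j
  · have hconst : ∀ q ∈ p.parts, ∀ i ∈ q, m i = Mv m q := by
      intro q hqp i hi
      have hq := p.nonempty_of_mem_parts hqp
      rw [Mv_eq m hq]
      exact h1 q hqp i hi _ (q.min'_mem hq)
    by_cases h2 : ∀ q ∈ p.parts, q.card = Mv m q
    · -- good case
      have hsum2 : ∑ q ∈ p.parts, (Mv m q : ℤ) = (n : ℤ) := by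
        have hN : ∑ q ∈ p.parts, Mv m q = n := by
          calc ∑ q ∈ p.parts, Mv m q = ∑ q ∈ p.parts, q.card :=
                Finset.sum_congr rfl (fun q hq => (h2 q hq).symm)
            _ = (Finset.univ : Finset (Fin n)).card := p.sum_card_parts
            _ = n := Finset.card_fin n
        exact_mod_cast congrArg (Nat.cast : ℕ → ℤ) hN
      rw [hsum2, sub_self]
      have hc0 : c' 0 = c 0 := by simpa using hc'nat 0
      rw [hc0]
      congr 1
      refine Finset.prod_congr rfl fun q hqp => ?_
      have hq := p.nonempty_of_mem_parts hqp
      have hMv := Mv_eq m hq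
      rw [Fw, Wt, dif_pos hq, if_pos (h1 q hqp), if_pos, ← hMv, ← h2 q hqp,
        h2 q hqp, Nat.descFactorial_self, one_mul]
      constructor
      · intro i hi
        rw [← hMv]
        exact hconst q hqp i hi
      · rw [← hMv]
        exact h2 q hqp
    · -- some block has wrong size
      push_neg at h2
      obtain ⟨q0, hq0p, hq0c⟩ := h2
      have hq0 := p.nonempty_of_mem_parts hq0p
      have hWq0 : Wt b m q0 = 0 := by
        rw [Wt, dif_pos hq0, if_neg]
        rintro ⟨-, hcard⟩
        exact hq0c (hcard.trans (Mv_eq m hq0).symm)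
      rw [Finset.prod_eq_zero hq0p hWq0, mul_zero]
      by_cases h3 : ∀ q ∈ p.parts, q.card ≤ Mv m q
      · have hs : ∑ q ∈ p.parts, q.card < ∑ q ∈ p.parts, Mv m q :=
          Finset.sum_lt_sum h3 ⟨q0, hq0p, lt_of_le_of_ne (h3 q0 hq0p) hq0c⟩
        have hn' : ∑ q ∈ p.parts, q.card = n := p.sum_card_parts.trans (Finset.card_fin n)
        have hlt : (n : ℤ) - ∑ q ∈ p.parts, (Mv m q : ℤ) < 0 := by
          have h4 : ((∑ q ∈ p.parts, q.card : ℕ) : ℤ) < ((∑ q ∈ p.parts, Mv m q : ℕ) : ℤ) := by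
            exact_mod_cast hs
          rw [hn'] at h4
          push_cast at h4
          linarith
        rw [hc'neg _ hlt, zero_mul]
      · push_neg at h3
        obtain ⟨q1, hq1p, hq1⟩ := h3
        have hF : Fw b m q1 = 0 := by
          rw [Fw, Nat.descFactorial_eq_zero_iff_lt.2 hq1]
          simp
        rw [Finset.prod_eq_zero hq1p hF, mul_zero]
  · push_neg at h1
    obtain ⟨q, hqp, i, hi, j, hj, hij⟩ := h1
    have hq := p.nonempty_of_mem_parts hqp
    have hF : Fw b m q = 0 := by
      rw [Fw, if_neg (fun h => hij (h i hi j hj)), zero_mul, zero_mul]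
    have hW : Wt b m q = 0 := by
      rw [Wt, dif_pos hq, if_neg]
      rintro ⟨hc, -⟩
      exact hij ((hc i hi).trans (hc j hj).symm)
    rw [Finset.prod_eq_zero hqp hF, Finset.prod_eq_zero hqp hW, mul_zero, mul_zero]

lemma key (b : ℕ → ℝ) {n : ℕ} (m : Fin n → ℕ) (hm : ∀ i, 1 ≤ m i) (s : Finset (Fin n)) :
    ∑ p : Finpartition s, ∏ q ∈ p.parts, Wt b m q
      = ∏ v ∈ s.image m, gfun b v ((s.filter (fun i => m i = v)).card) := by
  induction s using Finset.strongInduction with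
  | _ s ih =>
  rcases s.eq_empty_or_nonempty with rfl | hs
  · haveI : Unique (Finpartition (∅ : Finset (Fin n))) := Finset.bot_eq_empty ▸ inferInstance
    rw [Finset.univ_unique, Finset.sum_singleton, image_empty, prod_empty]
    rw [show (default : Finpartition (∅ : Finset (Fin n))).parts = ∅ from
      Finpartition.parts_eq_empty_iff.2 (by simp), prod_empty]
  · set a := s.min' hs with ha_def
    have ha : a ∈ s := s.min'_mem hs
    set v0 := m a with hv0_def
    set fib := s.filter (fun i => m i = v0) with hfib_def
    have hafib : a ∈ fib := by simp [hfib_def, ha, hv0_def]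
    set k0 := fib.card with hk0_def
    have hv0 : 1 ≤ v0 := hm a
    have hk0 : 1 ≤ k0 := card_pos.2 ⟨a, hafib⟩
    have hfibs : fib ⊆ s := filter_subset _ _
    rw [recursion (Wt b m) ha]
    set A := fib.powerset.filter (fun t => a ∈ t ∧ t.card = v0) with hA_def
    have hsub : A ⊆ s.powerset.filter (fun t => a ∈ t) := by
      intro t ht
      simp only [hA_def, mem_filter, mem_powerset] at ht ⊢
      exact ⟨ht.1.trans hfibs, ht.2.1⟩
    -- minimum of any admissible block is `a`
    have hmin : ∀ t : Finset (Fin n), t ⊆ s → ∀ hat : a ∈ t, t.min' ⟨a, hat⟩ = a := by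
      intro t hts hat
      exact le_antisymm (t.min'_le a hat) (s.min'_le _ (hts (t.min'_mem ⟨a, hat⟩)))
    have hzero : ∀ t ∈ s.powerset.filter (fun t => a ∈ t), t ∉ A →
        Wt b m t * ∑ P : Finpartition (s \ t), ∏ q ∈ P.parts, Wt b m q = 0 := by
      intro t ht hnt
      simp only [mem_filter, mem_powerset] at ht
      obtain ⟨hts, hat⟩ := ht
      have htne : t.Nonempty := ⟨a, hat⟩
      have hWt : Wt b m t = 0 := by
        rw [Wt, dif_pos htne, if_neg]
        rw [hmin t hts hat]
        rintro ⟨hconst, hcard⟩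
        exact hnt (by
          simp only [hA_def, mem_filter, mem_powerset]
          exact ⟨fun i hi => mem_filter.2 ⟨hts hi, hconst i hi⟩, hat, hcard⟩)
      rw [hWt, zero_mul]
    rw [← Finset.sum_subset hsub hzero]
    -- now evaluate each term over A
    have hterm : ∀ t ∈ A,
        Wt b m t * ∑ P : Finpartition (s \ t), ∏ q ∈ P.parts, Wt b m q
          = (b v0 * (Nat.factorial v0 : ℝ)) *
            (gfun b v0 (k0 - v0) *
              ∏ v ∈ (s.image m).erase v0, gfun b v ((s.filter (fun i => m i = v)).card)) := by
      intro t ht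
      simp only [hA_def, mem_filter, mem_powerset] at ht
      obtain ⟨htfib, hat, htc⟩ := ht
      have hts : t ⊆ s := htfib.trans hfibs
      have htne : t.Nonempty := ⟨a, hat⟩
      have htmin := hmin t hts hat
      have hWt : Wt b m t = b v0 * (Nat.factorial v0 : ℝ) := by
        rw [Wt, dif_pos htne, htmin, if_pos]
        exact ⟨fun i hi => (mem_filter.1 (htfib hi)).2, htc⟩
      rw [hWt, ih (s \ t) (Finset.sdiff_ssubset hts htne)]
      congr 1
      -- rewrite the product over the smaller image as product over s.image m
      rw [Finset.prod_subset (image_subset_image Finset.sdiff_subset : (s \ t).image m ⊆ s.image m)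
        (by
          intro v _ hv
          have hempty : (s \ t).filter (fun i => m i = v) = ∅ := by
            rw [filter_eq_empty_iff]
            intro i hi him
            exact hv (mem_image.2 ⟨i, hi, him⟩)
          rw [hempty, card_empty, gfun_zero])]
      have hv0img : v0 ∈ s.image m := mem_image_of_mem m ha
      rw [← Finset.mul_prod_erase _ _ hv0img]
      congr 1
      · -- the v0 factor
        have : (s \ t).filter (fun i => m i = v0) = fib \ t := by
          ext i
          simp only [mem_filter, mem_sdiff, hfib_def]
          tauto
        rw [this, card_sdiff_of_subset htfib, htc]
      · refine Finset.prod_congr rfl fun v hv => ?_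
        have hvne : v ≠ v0 := (mem_erase.1 hv).1
        have heq : (s \ t).filter (fun i => m i = v) = s.filter (fun i => m i = v) := by
          ext i
          simp only [mem_filter, mem_sdiff]
          constructor
          · rintro ⟨⟨his, _⟩, him⟩
            exact ⟨his, him⟩
          · rintro ⟨his, him⟩
            refine ⟨⟨his, fun hit => hvne ?_⟩, him⟩
            rw [← him, (mem_filter.1 (htfib hit)).2]
        rw [heq]
    rw [Finset.sum_congr rfl hterm, Finset.sum_const, card_coset fib hafib hv0]
    have hv0img : v0 ∈ s.image m := mem_image_of_mem m ha
    rw [← Finset.mul_prod_erase _ _ hv0img, ← gfun_rec b hv0 hk0, nsmul_eq_mul]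
    ring

theorem partSum_closed_form
    (b : ℕ → ℝ) (c : ℕ → ℝ)
    (c' : ℤ → ℝ) (hc'nat : ∀ j : ℕ, c' j = c j) (hc'neg : ∀ j : ℤ, j < 0 → c' j = 0)
    (n : ℕ) (hn : 1 ≤ n) (m : Fin n → ℕ) (hm : ∀ i, 1 ≤ m i) :
    ((∀ v ∈ Finset.univ.image m, v ∣ (Finset.univ.filter (fun i => m i = v)).card) →
      partSum b c' n m =
        c 0 * ∏ v ∈ Finset.univ.image m,
          (b v) ^ ((Finset.univ.filter (fun i => m i = v)).card / v) *
            (Nat.factorial ((Finset.univ.filter (fun i => m i = v)).card) : ℝ) /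
            (Nat.factorial ((Finset.univ.filter (fun i => m i = v)).card / v) : ℝ)) ∧
    (¬ (∀ v ∈ Finset.univ.image m, v ∣ (Finset.univ.filter (fun i => m i = v)).card) →
      partSum b c' n m = 0) := by
  constructor
  · intro hdvd
    rw [partSum_reduce b c c' hc'nat hc'neg n m, key b m hm Finset.univ]
    congr 1
    refine Finset.prod_congr rfl fun v hv => ?_
    rw [gfun, if_pos (hdvd v hv)]
  · intro hnd
    rw [partSum_reduce b c c' hc'nat hc'neg n m, key b m hm Finset.univ]
    push_neg at hnd
    obtain ⟨v, hv, hndvd⟩ := hnd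
    refine mul_eq_zero_of_right _ (Finset.prod_eq_zero hv ?_)
    rw [gfun, if_neg hndvd]
end

section
/- Let L and A be finite additive abelian groups, let g ∈ ℕ, let μ : (Fin g → A) → ℂ and F : L ⊗[ℤ] A → ℂ be arbitrary functions. Then ∑_{c : Fin g → L} ∑_{f : Fin g → A} μ f · F(∑_{i : Fin g} (c i) ⊗ₜ (f i)) = ((card L)^g / card (L ⊗[ℤ] A)) · ∑_{ψ : AddChar (L ⊗[ℤ] A) ℂ} ( ∑_{f : Fin g → A, f i ∈ K_ψ for all i} μ f ) · ( ∑_{θ ∈ L ⊗[ℤ] A} F θ · ψ θ ), where K_ψ := {a ∈ A | ψ(l ⊗ₜ a) = 1 for all l ∈ L}. -/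
open Finset TensorProduct
open scoped Classical

private lemma addchar_map_sum' {A M : Type*} [AddCommMonoid A] [CommMonoid M]
    (ψ : AddChar A M) {ι : Type*} (s : Finset ι) (x : ι → A) :
    ψ (∑ i ∈ s, x i) = ∏ i ∈ s, ψ (x i) := by
  induction s using Finset.cons_induction with
  | empty => simp
  | cons a s ha ih => rw [Finset.sum_cons, Finset.prod_cons, ψ.map_add_eq_mul, ih]

theorem fourier_rewriting_of_boundary_sum
    (L A : Type*) [AddCommGroup L] [AddCommGroup A] [Fintype L] [Fintype A]
    [Fintype (TensorProduct ℤ L A)]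
    (g : ℕ) (μ : (Fin g → A) → ℂ) (F : TensorProduct ℤ L A → ℂ) :
    ∑ c : Fin g → L, ∑ f : Fin g → A,
        μ f * F (∑ i : Fin g, (c i) ⊗ₜ[ℤ] (f i)) =
      ((Fintype.card L : ℂ) ^ g / (Fintype.card (TensorProduct ℤ L A) : ℂ)) *
        ∑ ψ : AddChar (TensorProduct ℤ L A) ℂ,
          (∑ f ∈ Finset.univ.filter
              (fun f : Fin g → A => ∀ i, ∀ l : L, ψ (l ⊗ₜ[ℤ] (f i)) = 1), μ f) *
          (∑ θ : TensorProduct ℤ L A, F θ * ψ θ) := by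
  set N : ℂ := (Fintype.card (TensorProduct ℤ L A) : ℂ) with hNdef
  have hN : N ≠ 0 := Nat.cast_ne_zero.2 Fintype.card_ne_zero
  -- Fourier expansion of F
  have hF : ∀ x : TensorProduct ℤ L A,
      F x = N⁻¹ * ∑ ψ : AddChar (TensorProduct ℤ L A) ℂ,
        (∑ θ : TensorProduct ℤ L A, F θ * ψ θ) * ψ (-x) := by
    intro x
    have h1 : ∑ ψ : AddChar (TensorProduct ℤ L A) ℂ,
        (∑ θ : TensorProduct ℤ L A, F θ * ψ θ) * ψ (-x)
        = ∑ θ : TensorProduct ℤ L A, F θ * ∑ ψ : AddChar (TensorProduct ℤ L A) ℂ, ψ (θ - x) :=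
      calc ∑ ψ : AddChar (TensorProduct ℤ L A) ℂ,
            (∑ θ : TensorProduct ℤ L A, F θ * ψ θ) * ψ (-x)
          = ∑ ψ : AddChar (TensorProduct ℤ L A) ℂ, ∑ θ : TensorProduct ℤ L A,
              F θ * ψ θ * ψ (-x) := by simp only [Finset.sum_mul]
        _ = ∑ θ : TensorProduct ℤ L A, ∑ ψ : AddChar (TensorProduct ℤ L A) ℂ,
              F θ * ψ θ * ψ (-x) := Finset.sum_comm
        _ = ∑ θ : TensorProduct ℤ L A, F θ *
              ∑ ψ : AddChar (TensorProduct ℤ L A) ℂ, ψ (θ - x) := by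
            refine Finset.sum_congr rfl fun θ _ => ?_
            rw [Finset.mul_sum]
            refine Finset.sum_congr rfl fun ψ _ => ?_
            rw [mul_assoc, ← ψ.map_add_eq_mul, sub_eq_add_neg]
    have h2 : ∀ θ : TensorProduct ℤ L A,
        ∑ ψ : AddChar (TensorProduct ℤ L A) ℂ, ψ (θ - x) = if θ = x then N else 0 := by
      intro θ
      rw [AddChar.sum_apply_eq_ite, sub_eq_zero]
    rw [h1]
    simp only [h2, mul_ite, mul_zero]
    rw [Finset.sum_ite_eq' Finset.univ x (fun θ => F θ * N), if_pos (Finset.mem_univ x)]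
    field_simp
  -- character sum over L
  have hchar : ∀ (ψ : AddChar (TensorProduct ℤ L A) ℂ) (a : A), ∑ l : L, ψ (l ⊗ₜ[ℤ] a)
      = if (∀ l : L, ψ (l ⊗ₜ[ℤ] a) = 1) then (Fintype.card L : ℂ) else 0 := by
    intro ψ a
    set χ : AddChar L ℂ := ψ.compAddMonoidHom ((TensorProduct.mk ℤ L A).flip a).toAddMonoidHom
      with hχ
    have happ : ∀ l : L, χ l = ψ (l ⊗ₜ[ℤ] a) := fun l => rfl
    have h : ∑ l : L, ψ (l ⊗ₜ[ℤ] a) = ∑ l : L, χ l :=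
      Finset.sum_congr rfl fun l _ => (happ l).symm
    rw [h, AddChar.sum_eq_ite]
    congr 1
    simp only [eq_iff_iff]
    rw [AddChar.eq_zero_iff]
    exact forall_congr' fun l => by rw [happ]
  -- the inner sum over c
  have hc : ∀ (ψ : AddChar (TensorProduct ℤ L A) ℂ) (f : Fin g → A),
      ∑ c : Fin g → L, ψ (-(∑ i : Fin g, (c i) ⊗ₜ[ℤ] (f i)))
        = if (∀ i, ∀ l : L, ψ (l ⊗ₜ[ℤ] (f i)) = 1) then (Fintype.card L : ℂ) ^ g else 0 := by
    intro ψ f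
    have step1 : ∑ c : Fin g → L, ψ (-(∑ i : Fin g, (c i) ⊗ₜ[ℤ] (f i)))
        = ∑ c : Fin g → L, ψ (∑ i : Fin g, (c i) ⊗ₜ[ℤ] (f i)) := by
      refine Fintype.sum_equiv (Equiv.neg _) _ _ fun c => ?_
      congr 1
      simp [neg_tmul]
    rw [step1]
    have step2 : ∑ c : Fin g → L, ψ (∑ i : Fin g, (c i) ⊗ₜ[ℤ] (f i))
        = ∏ i : Fin g, ∑ l : L, ψ (l ⊗ₜ[ℤ] (f i)) := by
      rw [Fintype.prod_sum (fun i (l : L) => ψ (l ⊗ₜ[ℤ] (f i)))]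
      exact Finset.sum_congr rfl fun c _ => addchar_map_sum' ψ _ _
    rw [step2]
    by_cases h : ∀ i, ∀ l : L, ψ (l ⊗ₜ[ℤ] (f i)) = 1
    · rw [if_pos h]
      calc ∏ i : Fin g, ∑ l : L, ψ (l ⊗ₜ[ℤ] (f i))
          = ∏ _i : Fin g, (Fintype.card L : ℂ) := by
            refine Finset.prod_congr rfl fun i _ => ?_
            rw [hchar, if_pos (h i)]
        _ = (Fintype.card L : ℂ) ^ g := by simp
    · rw [if_neg h]
      obtain ⟨i, hi⟩ := not_forall.1 h
      refine Finset.prod_eq_zero (Finset.mem_univ i) ?_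
      rw [hchar, if_neg hi]
  -- main computation
  calc ∑ c : Fin g → L, ∑ f : Fin g → A, μ f * F (∑ i : Fin g, (c i) ⊗ₜ[ℤ] (f i))
      = ∑ f : Fin g → A, ∑ ψ : AddChar (TensorProduct ℤ L A) ℂ,
          N⁻¹ * μ f * ((∑ θ : TensorProduct ℤ L A, F θ * ψ θ) *
            ∑ c : Fin g → L, ψ (-(∑ i : Fin g, (c i) ⊗ₜ[ℤ] (f i)))) := by
        rw [Finset.sum_comm]
        refine Finset.sum_congr rfl fun f _ => ?_
        calc ∑ c : Fin g → L, μ f * F (∑ i : Fin g, (c i) ⊗ₜ[ℤ] (f i))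
            = ∑ c : Fin g → L, ∑ ψ : AddChar (TensorProduct ℤ L A) ℂ,
                μ f * (N⁻¹ * ((∑ θ : TensorProduct ℤ L A, F θ * ψ θ) *
                  ψ (-(∑ i : Fin g, (c i) ⊗ₜ[ℤ] (f i))))) := by
              refine Finset.sum_congr rfl fun c _ => ?_
              rw [hF]
              simp only [Finset.mul_sum]
          _ = ∑ ψ : AddChar (TensorProduct ℤ L A) ℂ, ∑ c : Fin g → L,
                μ f * (N⁻¹ * ((∑ θ : TensorProduct ℤ L A, F θ * ψ θ) *
                  ψ (-(∑ i : Fin g, (c i) ⊗ₜ[ℤ] (f i))))) := Finset.sum_comm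
          _ = ∑ ψ : AddChar (TensorProduct ℤ L A) ℂ,
                N⁻¹ * μ f * ((∑ θ : TensorProduct ℤ L A, F θ * ψ θ) *
                  ∑ c : Fin g → L, ψ (-(∑ i : Fin g, (c i) ⊗ₜ[ℤ] (f i)))) := by
              refine Finset.sum_congr rfl fun ψ _ => ?_
              simp only [Finset.mul_sum]
              exact Finset.sum_congr rfl fun c _ => by ring
    _ = ∑ ψ : AddChar (TensorProduct ℤ L A) ℂ, ∑ f : Fin g → A,
          N⁻¹ * μ f * ((∑ θ : TensorProduct ℤ L A, F θ * ψ θ) *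
            if (∀ i, ∀ l : L, ψ (l ⊗ₜ[ℤ] (f i)) = 1) then (Fintype.card L : ℂ) ^ g else 0) := by
        rw [Finset.sum_comm]
        exact Finset.sum_congr rfl fun ψ _ => Finset.sum_congr rfl fun f _ => by rw [hc]
    _ = ((Fintype.card L : ℂ) ^ g / N) *
        ∑ ψ : AddChar (TensorProduct ℤ L A) ℂ,
          (∑ f ∈ Finset.univ.filter
              (fun f : Fin g → A => ∀ i, ∀ l : L, ψ (l ⊗ₜ[ℤ] (f i)) = 1), μ f) *
          (∑ θ : TensorProduct ℤ L A, F θ * ψ θ) := by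
        rw [Finset.mul_sum]
        refine Finset.sum_congr rfl fun ψ _ => ?_
        rw [Finset.sum_filter, Finset.sum_mul, Finset.mul_sum]
        refine Finset.sum_congr rfl fun f _ => ?_
        by_cases h : ∀ i, ∀ l : L, ψ (l ⊗ₜ[ℤ] (f i)) = 1 <;>
          simp only [h, implies_true, if_pos, if_neg, ite_true, ite_false, mul_zero, zero_mul, mul_one] <;>
          field_simp <;> ring
end
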